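/- Let X be an A_∞-algebra and (i, p, h) a deformation retract onto Y with h∘i = 0 and h satisfying the generalized Leibniz rule for A_∞-algebras: h(m_n(a_1 ⊗ ⋯ ⊗ a_n)) ∈ Σ_{j=1}^n m_n(X ⊗ ⋯ ⊗ h(a_j) ⊗ ⋯ ⊗ X) for all n ≥ 2. Then the operations transferred via the Homotopy Transfer Theorem are simply m_n^Y = p ∘ m_n^X ∘ (i ⊗ ⋯ ⊗ i) for all n ≥ 1. -/

import Mathlib

/-- Planar rooted trees with inputs of type `α` at the leaves. -/
inductive PT (α : Type*) : Type _ where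
  | leaf : α → PT α
  | node : List (PT α) → PT α

/-- Well-formed trees: every internal vertex has at least two children. -/
inductive PT.Good {α : Type*} : PT α → Prop where
  | leaf (y : α) : PT.Good (.leaf y)
  | node (ts : List (PT α)) : 2 ≤ ts.length → (∀ t ∈ ts, PT.Good t) →
      PT.Good (.node ts)

/-- The Homotopy Transfer Theorem composite attached to a planar rooted tree
(below the root): a leaf carrying `y : Y` contributes `i y`, and each
internal vertex with children `ts` contributes `h (mX [values of ts])`, where
`mX l` denotes the A_∞-operation `m_{l.length}^X` applied to the list `l`. -/
noncomputable def PT.evh {X Y : Type*} [AddCommGroup X] [AddCommGroup Y]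
    (i : Y → X) (h : X → X) (mX : List X → X) : PT Y → X
  | .leaf y => i y
  | .node ts => h (mX (ts.attach.map (fun t => PT.evh i h mX t.1)))
  decreasing_by
    simp only [PT.node.sizeOf_spec]
    exact Nat.lt_of_lt_of_le (List.sizeOf_lt_of_mem t.2) (Nat.le_add_left _ _)

/-
Homotopy Transfer Theorem for A_∞-algebras under the generalized Leibniz
rule for A_∞-algebras: X an A_∞-algebra (operations mX, with m_n = mX on
lists of length n, multilinear), (i, p, h) a deformation retract onto Y with
h∘i = 0 and h(m_n(a₁⊗⋯⊗aₙ)) ∈ Σ_j m_n(X⊗⋯⊗h(a_j)⊗⋯⊗X) for n ≥ 2.  Then every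
tree composite of the transfer formula other than the corolla vanishes, so
the transferred operations are m_n^Y = p ∘ m_n^X ∘ (i ⊗ ⋯ ⊗ i) — the corolla
with root operation m_n^X, inputs i, and output p, i.e.
m_n^Y (y₁,…,yₙ) = p (mX [i y₁, …, i yₙ]).
-/
theorem HTT_Ainfinity_transferred_operations {R X Y : Type*} [CommRing R]
    [AddCommGroup X] [Module R X] [AddCommGroup Y] [Module R Y]
    (dX : X →ₗ[R] X) (dY : Y →ₗ[R] Y)
    (hdX2 : dX ∘ₗ dX = 0) (hdY2 : dY ∘ₗ dY = 0)
    (i : Y →ₗ[R] X) (p : X →ₗ[R] Y) (h : X →ₗ[R] X)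
    (hichain : dX ∘ₗ i = i ∘ₗ dY) (hpchain : dY ∘ₗ p = p ∘ₗ dX)
    (hpi : p ∘ₗ i = LinearMap.id)
    (hip : i ∘ₗ p = LinearMap.id + dX ∘ₗ h + h ∘ₗ dX)
    (hhi : h ∘ₗ i = 0)
    -- the A_∞-operations of X, as a single map on lists (mX on lists of
    -- length n is the operation m_n^X); m_1 = dX; multilinear in each slot
    (mX : List X → X)
    (hm1 : ∀ x : X, mX [x] = dX x)
    (hadd : ∀ (l1 l2 : List X) (x y : X),
      mX (l1 ++ (x + y) :: l2) = mX (l1 ++ x :: l2) + mX (l1 ++ y :: l2))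
    (hsmul : ∀ (l1 l2 : List X) (r : R) (x : X),
      mX (l1 ++ (r • x) :: l2) = r • mX (l1 ++ x :: l2))
    (hzero : ∀ l1 l2 : List X, mX (l1 ++ (0 : X) :: l2) = 0)
    -- the generalized Leibniz rule for A_∞-algebras :
    -- h(m_n(a₁ ⊗ ⋯ ⊗ aₙ)) ∈ Σ_j m_n(X ⊗ ⋯ ⊗ h(a_j) ⊗ ⋯ ⊗ X) for n ≥ 2
    (hgenA : ∀ l : List X, 2 ≤ l.length →
      ∃ v : Fin l.length → List X × List X,
        (∀ j, (v j).1.length = (j : ℕ)) ∧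
        h (mX l) = ∑ j : Fin l.length,
          mX ((v j).1 ++ h (l.get j) :: (v j).2)) :
    -- conclusion: every well-formed tree with at least one internal vertex
    -- below the root (i.e. other than the corolla) contributes zero, hence
    -- the transferred A_∞-structure on Y is m_n^Y = p ∘ m_n^X ∘ (i ⊗ ⋯ ⊗ i)
    (∀ ts : List (PT Y), 2 ≤ ts.length → (∀ t ∈ ts, t.Good) →
      (∃ t ∈ ts, ∃ us : List (PT Y), t = PT.node us) →
      p (mX (ts.map (PT.evh (fun y => i y) (fun x => h x) mX))) = 0) ∧
    (∀ ys : List Y,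
      p (mX ((ys.map (fun y => PT.leaf y)).map
          (PT.evh (fun y => i y) (fun x => h x) mX))) =
        p (mX (ys.map (fun y => i y)))) := by
  have mX_zero : ∀ l : List X, (0:X) ∈ l → mX l = 0 := by
    intro l hl
    obtain ⟨s, t, rfl⟩ := List.append_of_mem hl
    exact hzero s t
  have hhi' : ∀ y, h (i y) = 0 := fun y => LinearMap.congr_fun hhi y
  have key : ∀ n : ℕ, ∀ t : PT Y, sizeOf t ≤ n → t.Good →
      (∃ us : List (PT Y), t = PT.node us) →
      PT.evh (fun y => i y) (fun x => h x) mX t = 0 := by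
    intro n
    induction n with
    | zero =>
      rintro t ht hg ⟨us, rfl⟩
      simp only [PT.node.sizeOf_spec] at ht
      omega
    | succ n ih =>
      rintro t ht hg ⟨us, rfl⟩
      rw [PT.evh]
      set l := us.attach.map (fun t => PT.evh (fun y => i y) (fun x => h x) mX t.1)
        with hldef
      by_cases hc : ∃ u ∈ us, ∃ vs : List (PT Y), u = PT.node vs
      · obtain ⟨u, hu, vs, rfl⟩ := hc
        have h0 : (0:X) ∈ l := by
          rw [hldef]
          have hsz : sizeOf (PT.node vs) ≤ n := by
            have h1 := List.sizeOf_lt_of_mem hu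
            simp only [PT.node.sizeOf_spec] at ht ⊢
            simp only [PT.node.sizeOf_spec] at h1
            omega
          have hgu : (PT.node vs).Good := by
            cases hg with
            | node _ _ hall => exact hall _ hu
          exact List.mem_map.2 ⟨⟨PT.node vs, hu⟩, List.mem_attach _ _,
            ih (PT.node vs) hsz hgu ⟨vs, rfl⟩⟩
        rw [mX_zero l h0, map_zero]
      · push_neg at hc
        have hlen : 2 ≤ l.length := by
          rw [hldef, List.length_map, List.length_attach]
          cases hg with
          | node _ h2 _ => exact h2
        obtain ⟨v, hv1, hv2⟩ := hgenA l hlen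
        rw [hv2]
        apply Finset.sum_eq_zero
        intro j _
        have hall : ∀ x ∈ l, h x = 0 := by
          rw [hldef]
          intro x hx
          obtain ⟨⟨u, hu⟩, _, hEq⟩ := List.mem_map.1 hx
          cases u with
          | leaf y =>
            rw [← hEq, PT.evh]
            exact hhi' y
          | node vs => exact absurd rfl (hc _ hu vs)
        rw [hall (l.get j) (List.get_mem l _)]
        exact hzero _ _
  constructor
  · rintro ts hlen hgood ⟨t, ht, us, rfl⟩
    have h0 : (0:X) ∈ ts.map (PT.evh (fun y => i y) (fun x => h x) mX) := by
      refine List.mem_map.2 ⟨PT.node us, ht, ?_⟩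
      exact key _ _ le_rfl (hgood _ ht) ⟨us, rfl⟩
    rw [mX_zero _ h0, map_zero]
  · intro ys
    congr 2
    rw [List.map_map]
    apply List.map_congr_left
    intro y _
    rw [Function.comp_apply, PT.evh]
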